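/- For every nonnegative integer ν, every real t > 0, and every u with 0 < u < π, the series θ_{2,ν}(t,u) = Σ_{ℓ=0}^∞ e^{−ℓ(ℓ+2ν+1)t}·cos((2ℓ+2ν+1)u) converges, is differentiable in u, and satisfies Σ_{ℓ=0}^∞ (2ℓ+2ν+1)·e^{−ℓ(ℓ+2ν+1)t}·C_{2ℓ+2ν}^{(1)}(cos u) = −(1/sin u)·∂θ_{2,ν}/∂u(t,u), where the left-hand series also converges. -/

import Mathlib

open Real MeasureTheory

/-- Generalized binomial coefficient `C(a, j) = a(a-1)⋯(a-j+1)/j!`. -/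
noncomputable def genBinom (a : ℝ) (j : ℕ) : ℝ :=
  (∏ i ∈ Finset.range j, (a - i)) / (Nat.factorial j)

/-- Jacobi polynomial `P_ℓ^{(α,β)}(x)`. -/
noncomputable def jacobiP (α β : ℝ) (l : ℕ) (x : ℝ) : ℝ :=
  ∑ k ∈ Finset.range (l + 1),
    genBinom ((l : ℝ) + α) (l - k) * genBinom ((l : ℝ) + β) k *
      ((x - 1) / 2) ^ k * ((x + 1) / 2) ^ (l - k)

/-- Gegenbauer (ultraspherical) polynomial `C_m^{(λ)}(x)`. -/
noncomputable def gegenbauerC (m : ℕ) (lam : ℝ) (x : ℝ) : ℝ :=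
  ∑ k ∈ Finset.range (m / 2 + 1),
    (-1 : ℝ) ^ k *
      (Real.Gamma (lam + m - k) /
        (Real.Gamma lam * (Nat.factorial k) * (Nat.factorial (m - 2 * k)))) *
      (2 * x) ^ (m - 2 * k)

/-- Pochhammer symbol `(q)_k = q(q+1)⋯(q+k-1)`. -/
noncomputable def poch (q : ℝ) (k : ℕ) : ℝ := ∏ i ∈ Finset.range k, (q + i)

/-- Terminating Gauss hypergeometric function `₂F₁(-m, b; c; z)`. -/
noncomputable def hyp2F1 (m : ℕ) (b c z : ℝ) : ℝ :=
  ∑ k ∈ Finset.range (m + 1),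
    poch (-(m : ℝ)) k * poch b k / (poch c k * (Nat.factorial k)) * z ^ k

/-- The operator `(Df)(u) = -(1/sin u) f'(u)`. -/
noncomputable def Dop (f : ℝ → ℝ) : ℝ → ℝ := fun u => -(1 / Real.sin u) * deriv f u


noncomputable def Fch (m : ℕ) (x : ℝ) : ℝ :=
  ∑ k ∈ Finset.range (m / 2 + 1),
    (-1 : ℝ) ^ k * ((m - k).choose k) * (2 * x) ^ (m - 2 * k)

lemma Fch_ext (m N : ℕ) (hN : m / 2 + 1 ≤ N) (x : ℝ) :
    Fch m x = ∑ k ∈ Finset.range N,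
      (-1 : ℝ) ^ k * ((m - k).choose k) * (2 * x) ^ (m - 2 * k) := by
  rw [Fch]
  refine Finset.sum_subset (Finset.range_subset_range.2 hN) ?_
  intro k hk hk'
  simp only [Finset.mem_range] at hk hk'
  have h : m - k < k := by omega
  simp [Nat.choose_eq_zero_of_lt h]

lemma Fch_rec (m : ℕ) (x : ℝ) :
    Fch (m + 2) x = 2 * x * Fch (m + 1) x - Fch m x := by
  have h2 : (m + 2) / 2 + 1 = m / 2 + 1 + 1 := by omega
  rw [Fch, h2, Finset.sum_range_succ']
  have key : ∀ j ∈ Finset.range (m / 2 + 1),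
      (-1 : ℝ) ^ (j+1) * (((m + 2) - (j+1)).choose (j+1)) * (2 * x) ^ ((m + 2) - 2 * (j+1))
      = 2 * x * ((-1 : ℝ) ^ (j+1) * (((m + 1) - (j+1)).choose (j+1)) *
            (2 * x) ^ ((m + 1) - 2 * (j+1)))
        - (-1 : ℝ) ^ j * ((m - j).choose j) * (2 * x) ^ (m - 2 * j) := by
    intro j hj
    have hjm : j ≤ m / 2 := Nat.lt_succ_iff.mp (Finset.mem_range.mp hj)
    have e1 : (m + 2) - (j+1) = (m - j) + 1 := by omega
    have e2 : (m + 1) - (j+1) = m - j := by omega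
    have e3 : (m + 2) - 2 * (j+1) = m - 2 * j := by omega
    rw [e1, e2, e3, Nat.choose_succ_succ]
    rcases le_or_gt (2 * j + 1) m with h | h
    · have e4 : (m + 1) - 2 * (j+1) + 1 = m - 2 * j := by omega
      rw [← e4, pow_succ]
      push_cast
      ring
    · have hz : (m - j).choose (j + 1) = 0 := Nat.choose_eq_zero_of_lt (by omega)
      rw [hz]
      push_cast
      ring
  rw [Finset.sum_congr rfl key, Finset.sum_sub_distrib, ← Finset.mul_sum]
  have hFm : Fch m x = ∑ j ∈ Finset.range (m / 2 + 1),
      (-1 : ℝ) ^ j * ((m - j).choose j) * (2 * x) ^ (m - 2 * j) := rfl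
  have hFm1 : Fch (m + 1) x = (∑ j ∈ Finset.range (m / 2 + 1),
      (-1 : ℝ) ^ (j+1) * (((m + 1) - (j+1)).choose (j+1)) * (2 * x) ^ ((m + 1) - 2 * (j+1)))
      + (-1 : ℝ) ^ 0 * (((m + 1) - 0).choose 0) * (2 * x) ^ ((m + 1) - 2 * 0) := by
    rw [Fch_ext (m+1) (m/2 + 1 + 1) (by omega) x, Finset.sum_range_succ']
  have h0 : (-1 : ℝ) ^ 0 * (((m + 2) - 0).choose 0) * (2 * x) ^ ((m + 2) - 2 * 0)
      = 2 * x * ((-1 : ℝ) ^ 0 * (((m + 1) - 0).choose 0) * (2 * x) ^ ((m + 1) - 2 * 0)) := by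
    simp [pow_succ]
    ring
  rw [h0, ← hFm, hFm1]
  ring

lemma Fch_sin (m : ℕ) (u : ℝ) :
    Fch m (Real.cos u) * Real.sin u = Real.sin (((m : ℝ) + 1) * u) := by
  induction m using Nat.twoStepInduction with
  | zero => simp [Fch]
  | one =>
    have : Fch 1 (Real.cos u) = 2 * Real.cos u := by simp [Fch]
    rw [this]
    have h2 : ((1 : ℕ) : ℝ) + 1 = 2 := by norm_num
    rw [h2, Real.sin_two_mul]
    ring
  | more m ih1 ih2 =>
    rw [Fch_rec]
    have ha : ((m : ℝ) + 2 + 1) * u = (((m : ℝ) + 1) + 1) * u + u := by push_cast; ring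
    have hb : ((m : ℝ) + 1) * u = (((m : ℝ) + 1) + 1) * u - u := by ring
    have hc : (((m + 1 : ℕ) : ℝ) + 1) = ((m : ℝ) + 1) + 1 := by push_cast; ring
    have hd : (((m + 2 : ℕ) : ℝ) + 1) = (m : ℝ) + 2 + 1 := by push_cast; ring
    rw [hc] at ih2
    rw [hd, ha, Real.sin_add]
    have : (2 * Real.cos u * Fch (m + 1) (Real.cos u) - Fch m (Real.cos u)) * Real.sin u
        = 2 * Real.cos u * (Fch (m+1) (Real.cos u) * Real.sin u)
          - Fch m (Real.cos u) * Real.sin u := by ring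
    rw [this, ih2, ih1, hb, Real.sin_sub]
    ring

lemma gegen_eq_Fch (m : ℕ) (x : ℝ) : gegenbauerC m 1 x = Fch m x := by
  rw [gegenbauerC, Fch]
  refine Finset.sum_congr rfl fun k hk => ?_
  have hk' : k ≤ m / 2 := Nat.lt_succ_iff.mp (Finset.mem_range.mp hk)
  have hkm : 2 * k ≤ m := by omega
  have h1 : (1 : ℝ) + m - k = ((m - k : ℕ) : ℝ) + 1 := by
    push_cast [Nat.cast_sub (by omega : k ≤ m)]; ring
  have h2 : (m - k).choose k * (Nat.factorial k) * (Nat.factorial (m - 2 * k))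
      = Nat.factorial (m - k) := by
    have e : m - k - k = m - 2 * k := by omega
    have := Nat.choose_mul_factorial_mul_factorial (show k ≤ m - k by omega)
    rw [e] at this
    exact this
  have hc : Real.Gamma (1 + (m : ℝ) - k) /
      (Real.Gamma 1 * (Nat.factorial k) * (Nat.factorial (m - 2 * k)))
      = ((m - k).choose k : ℝ) := by
    rw [h1, Real.Gamma_nat_eq_factorial, Real.Gamma_one, one_mul]
    have h3 : ((Nat.factorial (m - k)) : ℝ)
        = ((m - k).choose k : ℝ) * ((Nat.factorial k : ℝ) * (Nat.factorial (m - 2 * k) : ℝ)) := by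
      exact_mod_cast (by rw [← h2]; ring : Nat.factorial (m - k)
        = (m - k).choose k * ((Nat.factorial k) * (Nat.factorial (m - 2 * k))))
    rw [h3]
    have hk0 : ((Nat.factorial k : ℝ)) ≠ 0 := by positivity
    have hk1 : ((Nat.factorial (m - 2 * k) : ℝ)) ≠ 0 := by positivity
    field_simp
  rw [hc]

theorem statement_14 (ν : ℕ) (t : ℝ) (ht : 0 < t) (u : ℝ) (hu1 : 0 < u) (hu2 : u < π) :
    (Summable fun l : ℕ =>
        Real.exp (-((l : ℝ) * ((l : ℝ) + 2 * ν + 1)) * t) *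
          Real.cos ((2 * (l : ℝ) + 2 * ν + 1) * u)) ∧
    DifferentiableAt ℝ
      (fun w : ℝ => ∑' l : ℕ,
        Real.exp (-((l : ℝ) * ((l : ℝ) + 2 * ν + 1)) * t) *
          Real.cos ((2 * (l : ℝ) + 2 * ν + 1) * w)) u ∧
    (Summable fun l : ℕ =>
        (2 * (l : ℝ) + 2 * ν + 1) * Real.exp (-((l : ℝ) * ((l : ℝ) + 2 * ν + 1)) * t) *
          gegenbauerC (2 * l + 2 * ν) 1 (Real.cos u)) ∧
    (∑' l : ℕ,
        (2 * (l : ℝ) + 2 * ν + 1) * Real.exp (-((l : ℝ) * ((l : ℝ) + 2 * ν + 1)) * t) *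
          gegenbauerC (2 * l + 2 * ν) 1 (Real.cos u))
      = -(1 / Real.sin u) *
          deriv (fun w : ℝ => ∑' l : ℕ,
            Real.exp (-((l : ℝ) * ((l : ℝ) + 2 * ν + 1)) * t) *
              Real.cos ((2 * (l : ℝ) + 2 * ν + 1) * w)) u := by
  have hs : Real.sin u ≠ 0 := ne_of_gt (Real.sin_pos_of_pos_of_lt_pi hu1 hu2)
  have hr0 : (0:ℝ) ≤ Real.exp (-t) := (Real.exp_pos _).le
  have hr1 : Real.exp (-t) < 1 := by
    rw [Real.exp_lt_one_iff]; linarith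
  have hE : ∀ l : ℕ, Real.exp (-((l : ℝ) * ((l : ℝ) + 2 * ν + 1)) * t) ≤ Real.exp (-t) ^ l := by
    intro l
    rw [← Real.exp_nat_mul]
    apply Real.exp_le_exp.2
    have h1 : (0:ℝ) ≤ (l:ℝ) * ((l:ℝ) + 2*ν) * t := by positivity
    nlinarith
  have hS1 : Summable fun l : ℕ =>
      Real.exp (-((l : ℝ) * ((l : ℝ) + 2 * ν + 1)) * t) *
        Real.cos ((2 * (l : ℝ) + 2 * ν + 1) * u) := by
    apply Summable.of_norm_bounded (summable_geometric_of_lt_one hr0 hr1)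
    intro l
    calc ‖Real.exp (-((l : ℝ) * ((l : ℝ) + 2 * ν + 1)) * t) *
          Real.cos ((2 * (l : ℝ) + 2 * ν + 1) * u)‖
        = Real.exp (-((l : ℝ) * ((l : ℝ) + 2 * ν + 1)) * t) *
          |Real.cos ((2 * (l : ℝ) + 2 * ν + 1) * u)| := by
          rw [norm_mul, Real.norm_eq_abs, Real.norm_eq_abs, Real.abs_exp]
      _ ≤ Real.exp (-((l : ℝ) * ((l : ℝ) + 2 * ν + 1)) * t) * 1 := by
          gcongr; exact Real.abs_cos_le_one _
      _ ≤ Real.exp (-t) ^ l := by rw [mul_one]; exact hE l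
  set g' : ℕ → ℝ → ℝ := fun l w =>
    Real.exp (-((l : ℝ) * ((l : ℝ) + 2 * ν + 1)) * t) *
      (-Real.sin ((2 * (l : ℝ) + 2 * ν + 1) * w) * ((2 * (l : ℝ) + 2 * ν + 1) * 1)) with hg'def
  have hg : ∀ (l : ℕ) (w : ℝ),
      HasDerivAt (fun w : ℝ => Real.exp (-((l : ℝ) * ((l : ℝ) + 2 * ν + 1)) * t) *
        Real.cos ((2 * (l : ℝ) + 2 * ν + 1) * w)) (g' l w) w := by
    intro l w
    exact (((hasDerivAt_id w).const_mul (2 * (l:ℝ) + 2 * ν + 1)).cos).const_mul _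
  have hu : Summable fun l : ℕ => (2 * (l:ℝ) + 2 * ν + 1) * Real.exp (-t) ^ l := by
    have ha : Summable (fun l : ℕ => (l:ℝ) * Real.exp (-t) ^ l) := by
      have := summable_pow_mul_geometric_of_norm_lt_one (R := ℝ) (r := Real.exp (-t)) 1
        (by rw [Real.norm_eq_abs, abs_of_nonneg hr0]; exact hr1)
      simpa using this
    have hb : Summable (fun l : ℕ => Real.exp (-t) ^ l) := summable_geometric_of_lt_one hr0 hr1
    refine Summable.congr ((ha.mul_left 2).add (hb.mul_left ((2*(ν:ℝ))+1))) ?_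
    intro l; push_cast; ring
  have hg'b : ∀ (l : ℕ) (w : ℝ), ‖g' l w‖ ≤ (2 * (l:ℝ) + 2 * ν + 1) * Real.exp (-t) ^ l := by
    intro l w
    have hc : (0:ℝ) ≤ 2 * (l:ℝ) + 2 * ν + 1 := by positivity
    calc ‖g' l w‖ = Real.exp (-((l : ℝ) * ((l : ℝ) + 2 * ν + 1)) * t) *
          (|Real.sin ((2 * (l : ℝ) + 2 * ν + 1) * w)| * (2 * (l:ℝ) + 2 * ν + 1)) := by
          rw [hg'def]
          simp only [mul_one]
          rw [norm_mul, norm_mul, Real.norm_eq_abs, Real.norm_eq_abs, Real.norm_eq_abs,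
            abs_neg, Real.abs_exp, abs_of_nonneg hc]
      _ ≤ Real.exp (-((l : ℝ) * ((l : ℝ) + 2 * ν + 1)) * t) * (1 * (2 * (l:ℝ) + 2 * ν + 1)) := by
          gcongr; exact Real.abs_sin_le_one _
      _ ≤ (2 * (l:ℝ) + 2 * ν + 1) * Real.exp (-t) ^ l := by
          rw [one_mul, mul_comm]; gcongr; exact hE l
  have hder : HasDerivAt (fun w : ℝ => ∑' l : ℕ,
      Real.exp (-((l : ℝ) * ((l : ℝ) + 2 * ν + 1)) * t) *
        Real.cos ((2 * (l : ℝ) + 2 * ν + 1) * w)) (∑' l : ℕ, g' l u) u :=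
    hasDerivAt_tsum hu hg hg'b hS1 u
  have hgeq : ∀ l : ℕ,
      (2 * (l : ℝ) + 2 * ν + 1) * Real.exp (-((l : ℝ) * ((l : ℝ) + 2 * ν + 1)) * t) *
        gegenbauerC (2 * l + 2 * ν) 1 (Real.cos u) = -(1 / Real.sin u) * g' l u := by
    intro l
    have harg : (((2 * l + 2 * ν : ℕ) : ℝ) + 1) = 2 * (l:ℝ) + 2 * ν + 1 := by push_cast; ring
    have hg2 : gegenbauerC (2 * l + 2 * ν) 1 (Real.cos u)
        = Real.sin ((2 * (l:ℝ) + 2 * ν + 1) * u) / Real.sin u := by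
      rw [eq_div_iff hs, gegen_eq_Fch, Fch_sin, harg]
    rw [hg2, hg'def]
    field_simp
  have hsum' : Summable fun l => g' l u :=
    Summable.of_norm_bounded hu (fun l => hg'b l u)
  have hS3 : Summable fun l : ℕ =>
      (2 * (l : ℝ) + 2 * ν + 1) * Real.exp (-((l : ℝ) * ((l : ℝ) + 2 * ν + 1)) * t) *
        gegenbauerC (2 * l + 2 * ν) 1 (Real.cos u) :=
    Summable.congr (hsum'.mul_left (-(1 / Real.sin u))) (fun l => (hgeq l).symm)
  refine ⟨hS1, hder.differentiableAt, hS3, ?_⟩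
  rw [hder.deriv, ← tsum_mul_left]
  exact tsum_congr hgeq
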